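/- In the single-instrument reduced-form model X = Δ(γ_X·G + β_{Y→X}·γ_Y·G + e_X), Y = Δ(β_{X→Y}·γ_X·G + γ_Y·G + e_Y) with Cov(G,e_X)=Cov(G,e_Y)=0, Var(G)>0, Δ = 1/(1−β_{X→Y}β_{Y→X}), γ_X ≠ 0, γ_Y = 0, and Var(X) > 0, Var(Y) > 0: if β_{X→Y}²·Var(X) < Var(Y), then |Corr(G,Y)/Corr(G,X)| = |β_{X→Y}|·√(Var(X)/Var(Y)) < 1. -/

import Mathlib

open MeasureTheory

noncomputable def Cov {Ω : Type*} [MeasurableSpace Ω] (μ : Measure Ω) (f g : Ω → ℝ) : ℝ :=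
  ∫ ω, f ω * g ω ∂μ - (∫ ω, f ω ∂μ) * (∫ ω, g ω ∂μ)

noncomputable def Var {Ω : Type*} [MeasurableSpace Ω] (μ : Measure Ω) (f : Ω → ℝ) : ℝ :=
  Cov μ f f

noncomputable def Corr {Ω : Type*} [MeasurableSpace Ω] (μ : Measure Ω) (f g : Ω → ℝ) : ℝ :=
  Cov μ f g / Real.sqrt (Var μ f * Var μ g)

lemma integrable_mul_of_memL2 {Ω : Type*} [MeasurableSpace Ω] {μ : Measure Ω} [IsFiniteMeasure μ]
    {f g : Ω → ℝ} (hf : MemLp f 2 μ) (hg : MemLp g 2 μ) :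
    Integrable (fun ω => f ω * g ω) μ := by
  have : MemLp (f • g) 1 μ := hg.smul hf
    (hpqr := ⟨by simp only [one_div, inv_one, ENNReal.inv_two_add_inv_two]⟩)
  exact this.integrable le_rfl

lemma cov_lin {Ω : Type*} [MeasurableSpace Ω] (μ : Measure Ω) [IsFiniteMeasure μ]
    {G e : Ω → ℝ} (hG : MemLp G 2 μ) (he : MemLp e 2 μ) (a b : ℝ) :
    Cov μ G (fun ω => a * G ω + b * e ω) = a * Var μ G + b * Cov μ G e := by
  have hGG := integrable_mul_of_memL2 hG hG
  have hGe := integrable_mul_of_memL2 hG he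
  have hGi : Integrable G μ := hG.integrable (by norm_num)
  have hei : Integrable e μ := he.integrable (by norm_num)
  have h1 : ∫ ω, G ω * (a * G ω + b * e ω) ∂μ
      = a * ∫ ω, G ω * G ω ∂μ + b * ∫ ω, G ω * e ω ∂μ := by
    calc ∫ ω, G ω * (a * G ω + b * e ω) ∂μ
        = ∫ ω, (a * (G ω * G ω) + b * (G ω * e ω)) ∂μ := by
          congr 1; funext ω; ring
      _ = (∫ ω, a * (G ω * G ω) ∂μ) + ∫ ω, b * (G ω * e ω) ∂μ :=
          integral_add (hGG.const_mul a) (hGe.const_mul b)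
      _ = a * ∫ ω, G ω * G ω ∂μ + b * ∫ ω, G ω * e ω ∂μ := by
          rw [integral_const_mul, integral_const_mul]
  have h2 : ∫ ω, (a * G ω + b * e ω) ∂μ = a * ∫ ω, G ω ∂μ + b * ∫ ω, e ω ∂μ := by
    rw [integral_add (hGi.const_mul a) (hei.const_mul b),
      integral_const_mul, integral_const_mul]
  simp only [Cov, Var, h1, h2]
  ring

/-- Direction criterion: for a valid instrument of X → Y, the correlation ratio is < 1. -/
theorem stmt_11 {Ω : Type*} [MeasurableSpace Ω] (μ : Measure Ω) [IsProbabilityMeasure μ]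
    (G eX eY X Y : Ω → ℝ) (βXY βYX γX γY : ℝ)
    (hGm : MemLp G 2 μ) (heXm : MemLp eX 2 μ) (heYm : MemLp eY 2 μ)
    (hβ : βXY * βYX ≠ 1) (hγY : γY = 0) (hγX : γX ≠ 0)
    (hGeX : Cov μ G eX = 0) (hGeY : Cov μ G eY = 0)
    (hVarG : 0 < Var μ G) (hVarX : 0 < Var μ X) (hVarY : 0 < Var μ Y)
    (hX : ∀ ω, X ω = (1 - βXY * βYX)⁻¹ *
        (γX * G ω + βYX * γY * G ω + eX ω))
    (hY : ∀ ω, Y ω = (1 - βXY * βYX)⁻¹ *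
        (βXY * γX * G ω + γY * G ω + eY ω))
    (hlt : βXY ^ 2 * Var μ X < Var μ Y) :
    |Corr μ G Y / Corr μ G X| = |βXY| * Real.sqrt (Var μ X / Var μ Y) ∧
    |Corr μ G Y / Corr μ G X| < 1 := by
  subst hγY
  set d := (1 - βXY * βYX)⁻¹ with hd
  have hdne : d ≠ 0 := inv_ne_zero (sub_ne_zero.mpr (Ne.symm hβ))
  have hXf : X = fun ω => (d * γX) * G ω + d * eX ω := by
    funext ω; rw [hX ω]; ring
  have hYf : Y = fun ω => (d * (βXY * γX)) * G ω + d * eY ω := by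
    funext ω; rw [hY ω]; ring
  have hCX : Cov μ G X = d * γX * Var μ G := by
    rw [hXf, cov_lin μ hGm heXm, hGeX]; ring
  have hCY : Cov μ G Y = d * (βXY * γX) * Var μ G := by
    rw [hYf, cov_lin μ hGm heYm, hGeY]; ring
  have hc : d * γX * Var μ G ≠ 0 :=
    mul_ne_zero (mul_ne_zero hdne hγX) (ne_of_gt hVarG)
  have hsGX : 0 < Real.sqrt (Var μ G * Var μ X) :=
    Real.sqrt_pos.mpr (mul_pos hVarG hVarX)
  have hsGY : 0 < Real.sqrt (Var μ G * Var μ Y) :=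
    Real.sqrt_pos.mpr (mul_pos hVarG hVarY)
  have hratio : Corr μ G Y / Corr μ G X
      = βXY * (Real.sqrt (Var μ G * Var μ X) / Real.sqrt (Var μ G * Var μ Y)) := by
    rw [Corr, Corr, hCX, hCY]
    field_simp
  have hsq : Real.sqrt (Var μ G * Var μ X) / Real.sqrt (Var μ G * Var μ Y)
      = Real.sqrt (Var μ X / Var μ Y) := by
    rw [← Real.sqrt_div (mul_pos hVarG hVarX).le,
      mul_div_mul_left _ _ (ne_of_gt hVarG)]
  have habs : |Corr μ G Y / Corr μ G X| = |βXY| * Real.sqrt (Var μ X / Var μ Y) := by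
    rw [hratio, hsq, abs_mul, abs_of_nonneg (Real.sqrt_nonneg _)]
  refine ⟨habs, ?_⟩
  rw [habs, ← Real.sqrt_sq_eq_abs, ← Real.sqrt_mul (sq_nonneg _)]
  have h1 : βXY ^ 2 * (Var μ X / Var μ Y) < 1 := by
    rw [← mul_div_assoc, div_lt_one hVarY]
    exact hlt
  calc Real.sqrt (βXY ^ 2 * (Var μ X / Var μ Y)) < Real.sqrt 1 :=
        Real.sqrt_lt_sqrt (by positivity) h1
    _ = 1 := Real.sqrt_one
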